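/- Let H be a finite-dimensional Hopf algebra and \mu^r a right integral on the dual Hopf algebra H^* (i.e. \mu^r \varphi = \varepsilon(\varphi)\mu^r for all \varphi in H^*). Then for all h in H and \varphi in H^*, the product in H^* satisfies \mu^r(h \cdot ?) \varphi = \mu^r(h' \cdot ?) \varphi(S^{-1}(h'')), where \Delta(h) = h' \otimes h'' and \mu^r(h?) denotes the functional x \mapsto \mu^r(hx). -/

import Mathlib

open scoped TensorProduct
open TensorProduct

variable {k A : Type} [Field k] [Ring A] [HopfAlgebra k A]

/-- Convolution product on the dual Hopf algebra `H* = O(H)`. -/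
noncomputable def conv (φ ψ : Module.Dual k A) : Module.Dual k A :=
  (LinearMap.mul' k k) ∘ₗ (TensorProduct.map φ ψ) ∘ₗ (Coalgebra.comul (R := k))

section Aux
open Coalgebra HopfAlgebra




lemma antipode_one' : HopfAlgebra.antipode (R := k) (1 : A) = 1 := by
  have := HopfAlgebra.mul_antipode_rTensor_comul_apply (R := k) (1 : A)
  simpa [Bialgebra.comul_one, Algebra.TensorProduct.one_def] using this

lemma repr_sum_counit_smul_left {a : A} {ι : Type*} (r : Coalgebra.Repr k a ι) :
    ∑ i ∈ r.index, Coalgebra.counit (R := k) (r.right i) • r.left i = a := by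
  have h := Coalgebra.sum_tmul_counit_eq r
  have h2 := congrArg (TensorProduct.rid k A) h
  simpa only [map_sum, TensorProduct.rid_tmul, TensorProduct.lid_tmul, one_smul] using h2

lemma repr_sum_counit_smul_right {a : A} {ι : Type*} (r : Coalgebra.Repr k a ι) :
    ∑ i ∈ r.index, Coalgebra.counit (R := k) (r.left i) • r.right i = a := by
  have h := Coalgebra.sum_counit_tmul_eq r
  have h2 := congrArg (TensorProduct.lid k A) h
  simpa only [map_sum, TensorProduct.rid_tmul, TensorProduct.lid_tmul, one_smul] using h2

noncomputable def reprMul {a b : A} {ι κ : Type*} (ra : Coalgebra.Repr k a ι) (rb : Coalgebra.Repr k b κ) :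
    Coalgebra.Repr k (a * b) (ι × κ) where
  index := ra.index ×ˢ rb.index
  left := fun p => ra.left p.1 * rb.left p.2
  right := fun p => ra.right p.1 * rb.right p.2
  eq := by
    rw [Finset.sum_product, Bialgebra.comul_mul, ← ra.eq, ← rb.eq, Finset.sum_mul_sum]
    simp [Algebra.TensorProduct.tmul_mul_tmul]


noncomputable def nuF (k A : Type) [Field k] [Ring A] [HopfAlgebra k A] : A ⊗[k] A →ₗ[k] A :=
  (LinearMap.mul' k A) ∘ₗ
    (TensorProduct.map (HopfAlgebra.antipode (R := k)) (HopfAlgebra.antipode (R := k))) ∘ₗ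
    (TensorProduct.comm k A A).toLinearMap

@[simp] lemma nuF_tmul (x y : A) :
    nuF k A (x ⊗ₜ y) = HopfAlgebra.antipode (R := k) y * HopfAlgebra.antipode (R := k) x := by
  simp [nuF]

noncomputable def FF (k A : Type) [Field k] [Ring A] [HopfAlgebra k A] :
    ((A ⊗[k] (A ⊗[k] A)) ⊗[k] (A ⊗[k] (A ⊗[k] A))) →ₗ[k] A :=
  (LinearMap.mul' k A) ∘ₗ
    (TensorProduct.map ((HopfAlgebra.antipode (R := k)) ∘ₗ LinearMap.mul' k A)
      ((LinearMap.mul' k A) ∘ₗ (TensorProduct.map (LinearMap.mul' k A) (nuF k A)) ∘ₗ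
        (TensorProduct.tensorTensorTensorComm k A A A A).toLinearMap)) ∘ₗ
    (TensorProduct.tensorTensorTensorComm k A (A ⊗[k] A) A (A ⊗[k] A)).toLinearMap

@[simp] lemma FF_tmul (x₁ x₂ x₃ y₁ y₂ y₃ : A) :
    FF k A ((x₁ ⊗ₜ (x₂ ⊗ₜ x₃)) ⊗ₜ (y₁ ⊗ₜ (y₂ ⊗ₜ y₃))) =
      HopfAlgebra.antipode (R := k) (x₁ * y₁) *
        ((x₂ * y₂) * (HopfAlgebra.antipode (R := k) y₃ * HopfAlgebra.antipode (R := k) x₃)) := by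
  simp [FF]


lemma lTensor_comul_expand2 (a : A) :
    (Coalgebra.comul (R := k) (A := A)).lTensor A (Coalgebra.comul (R := k) a)
      = ∑ i ∈ (ℛ k a).index, ∑ j ∈ (ℛ k ((ℛ k a).right i)).index,
          (ℛ k a).left i ⊗ₜ[k]
            ((ℛ k ((ℛ k a).right i)).left j ⊗ₜ[k] (ℛ k ((ℛ k a).right i)).right j) := by
  conv_lhs => rw [← (ℛ k a).eq]
  rw [map_sum]
  refine Finset.sum_congr rfl fun i _ => ?_
  rw [LinearMap.lTensor_tmul, ← (ℛ k ((ℛ k a).right i)).eq, tmul_sum]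

lemma lTensor_comul_expand1 (a : A) :
    (Coalgebra.comul (R := k) (A := A)).lTensor A (Coalgebra.comul (R := k) a)
      = ∑ i ∈ (ℛ k a).index, ∑ j ∈ (ℛ k ((ℛ k a).left i)).index,
          (ℛ k ((ℛ k a).left i)).left j ⊗ₜ[k]
            ((ℛ k ((ℛ k a).left i)).right j ⊗ₜ[k] (ℛ k a).right i) := by
  rw [← Coalgebra.coassoc_apply]
  conv_lhs => rw [← (ℛ k a).eq]
  rw [map_sum, map_sum]
  refine Finset.sum_congr rfl fun i _ => ?_
  rw [LinearMap.rTensor_tmul, ← (ℛ k ((ℛ k a).left i)).eq, sum_tmul, map_sum]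
  refine Finset.sum_congr rfl fun j _ => ?_
  rw [TensorProduct.assoc_tmul]

lemma FF_eq_left (a b : A) :
    FF k A (((Coalgebra.comul (R := k) (A := A)).lTensor A (Coalgebra.comul (R := k) a)) ⊗ₜ[k]
        ((Coalgebra.comul (R := k) (A := A)).lTensor A (Coalgebra.comul (R := k) b)))
      = HopfAlgebra.antipode (R := k) (a * b) := by
  rw [lTensor_comul_expand2 (k := k) a, lTensor_comul_expand2 (k := k) b]
  simp only [sum_tmul, tmul_sum, map_sum, FF_tmul]
  have step1 : ∀ p ∈ (ℛ k b).index,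
      (∑ q ∈ (ℛ k ((ℛ k b).right p)).index, ∑ i ∈ (ℛ k a).index,
        ∑ j ∈ (ℛ k ((ℛ k a).right i)).index,
          HopfAlgebra.antipode (R := k) ((ℛ k a).left i * (ℛ k b).left p) *
            ((ℛ k ((ℛ k a).right i)).left j * (ℛ k ((ℛ k b).right p)).left q *
              (HopfAlgebra.antipode (R := k) ((ℛ k ((ℛ k b).right p)).right q) *
                HopfAlgebra.antipode (R := k) ((ℛ k ((ℛ k a).right i)).right j))))
      = ∑ i ∈ (ℛ k a).index,
          Coalgebra.counit (R := k) ((ℛ k b).right p) •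
            Coalgebra.counit (R := k) ((ℛ k a).right i) •
              HopfAlgebra.antipode (R := k) ((ℛ k a).left i * (ℛ k b).left p) := by
    intro p _
    rw [Finset.sum_comm]
    refine Finset.sum_congr rfl fun i _ => ?_
    rw [Finset.sum_comm]
    have hq : ∀ j ∈ (ℛ k ((ℛ k a).right i)).index,
        (∑ q ∈ (ℛ k ((ℛ k b).right p)).index,
          HopfAlgebra.antipode (R := k) ((ℛ k a).left i * (ℛ k b).left p) *
            ((ℛ k ((ℛ k a).right i)).left j * (ℛ k ((ℛ k b).right p)).left q *
              (HopfAlgebra.antipode (R := k) ((ℛ k ((ℛ k b).right p)).right q) *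
                HopfAlgebra.antipode (R := k) ((ℛ k ((ℛ k a).right i)).right j))))
        = Coalgebra.counit (R := k) ((ℛ k b).right p) •
            (HopfAlgebra.antipode (R := k) ((ℛ k a).left i * (ℛ k b).left p) *
              ((ℛ k ((ℛ k a).right i)).left j *
                HopfAlgebra.antipode (R := k) ((ℛ k ((ℛ k a).right i)).right j))) := by
      intro j _
      rw [← Finset.mul_sum]
      have inner : (∑ q ∈ (ℛ k ((ℛ k b).right p)).index,
          ((ℛ k ((ℛ k a).right i)).left j * (ℛ k ((ℛ k b).right p)).left q *
            (HopfAlgebra.antipode (R := k) ((ℛ k ((ℛ k b).right p)).right q) *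
              HopfAlgebra.antipode (R := k) ((ℛ k ((ℛ k a).right i)).right j))))
          = Coalgebra.counit (R := k) ((ℛ k b).right p) •
              ((ℛ k ((ℛ k a).right i)).left j *
                HopfAlgebra.antipode (R := k) ((ℛ k ((ℛ k a).right i)).right j)) := by
        have collapse := HopfAlgebra.sum_mul_antipode_eq_smul (R := k)
          (ℛ k ((ℛ k b).right p))
        calc (∑ q ∈ (ℛ k ((ℛ k b).right p)).index,
            ((ℛ k ((ℛ k a).right i)).left j * (ℛ k ((ℛ k b).right p)).left q *
              (HopfAlgebra.antipode (R := k) ((ℛ k ((ℛ k b).right p)).right q) *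
                HopfAlgebra.antipode (R := k) ((ℛ k ((ℛ k a).right i)).right j))))
            = (∑ q ∈ (ℛ k ((ℛ k b).right p)).index,
                (ℛ k ((ℛ k a).right i)).left j *
                  ((ℛ k ((ℛ k b).right p)).left q *
                    HopfAlgebra.antipode (R := k) ((ℛ k ((ℛ k b).right p)).right q)) *
                  HopfAlgebra.antipode (R := k) ((ℛ k ((ℛ k a).right i)).right j)) := by
              refine Finset.sum_congr rfl fun q _ => ?_
              simp only [mul_assoc]
          _ = (ℛ k ((ℛ k a).right i)).left j *
                (∑ q ∈ (ℛ k ((ℛ k b).right p)).index,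
                  ((ℛ k ((ℛ k b).right p)).left q *
                    HopfAlgebra.antipode (R := k) ((ℛ k ((ℛ k b).right p)).right q))) *
                  HopfAlgebra.antipode (R := k) ((ℛ k ((ℛ k a).right i)).right j) := by
              rw [← Finset.sum_mul, ← Finset.mul_sum]
          _ = _ := by
              rw [collapse]
              simp [mul_smul_comm, smul_mul_assoc]
      rw [inner, mul_smul_comm]
    rw [Finset.sum_congr rfl hq, ← Finset.smul_sum, ← Finset.mul_sum,
      HopfAlgebra.sum_mul_antipode_eq_smul (R := k) (ℛ k ((ℛ k a).right i)),
      mul_smul_comm, mul_one]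
  rw [Finset.sum_congr rfl step1]
  conv_rhs => rw [← repr_sum_counit_smul_left (ℛ k a), ← repr_sum_counit_smul_left (ℛ k b)]
  rw [Finset.sum_mul_sum]
  simp only [map_sum]
  rw [Finset.sum_comm]
  refine Finset.sum_congr rfl fun i _ => Finset.sum_congr rfl fun p _ => ?_
  rw [smul_mul_assoc, mul_smul_comm, map_smul, map_smul, smul_smul, smul_smul, mul_comm]

lemma sum_antipode_mul_mul_eq_smul {c d : A} {ι κ : Type*} (rc : Coalgebra.Repr k c ι) (rd : Coalgebra.Repr k d κ) :
    ∑ j ∈ rc.index, ∑ q ∈ rd.index,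
        HopfAlgebra.antipode (R := k) (rc.left j * rd.left q) * (rc.right j * rd.right q)
      = Coalgebra.counit (R := k) (c * d) • (1 : A) := by
  have h := HopfAlgebra.mul_antipode_rTensor_comul_apply (R := k) (c * d)
  rw [Bialgebra.comul_mul, ← rc.eq, ← rd.eq, Finset.sum_mul_sum] at h
  simp only [Algebra.TensorProduct.tmul_mul_tmul] at h
  simp only [map_sum, LinearMap.rTensor_tmul, LinearMap.mul'_apply] at h
  rw [h, Algebra.algebraMap_eq_smul_one]

lemma FF_eq_right (a b : A) :
    FF k A (((Coalgebra.comul (R := k) (A := A)).lTensor A (Coalgebra.comul (R := k) a)) ⊗ₜ[k]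
        ((Coalgebra.comul (R := k) (A := A)).lTensor A (Coalgebra.comul (R := k) b)))
      = HopfAlgebra.antipode (R := k) b * HopfAlgebra.antipode (R := k) a := by
  rw [lTensor_comul_expand1 (k := k) a, lTensor_comul_expand1 (k := k) b]
  simp only [sum_tmul, tmul_sum, map_sum, FF_tmul]
  have step1 : ∀ p ∈ (ℛ k b).index,
      (∑ q ∈ (ℛ k ((ℛ k b).left p)).index, ∑ i ∈ (ℛ k a).index,
        ∑ j ∈ (ℛ k ((ℛ k a).left i)).index,
          HopfAlgebra.antipode (R := k)
              ((ℛ k ((ℛ k a).left i)).left j * (ℛ k ((ℛ k b).left p)).left q) *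
            ((ℛ k ((ℛ k a).left i)).right j * (ℛ k ((ℛ k b).left p)).right q *
              (HopfAlgebra.antipode (R := k) ((ℛ k b).right p) *
                HopfAlgebra.antipode (R := k) ((ℛ k a).right i))))
      = ∑ i ∈ (ℛ k a).index,
          (Coalgebra.counit (R := k) ((ℛ k a).left i) *
              Coalgebra.counit (R := k) ((ℛ k b).left p)) •
            (HopfAlgebra.antipode (R := k) ((ℛ k b).right p) *
              HopfAlgebra.antipode (R := k) ((ℛ k a).right i)) := by
    intro p _
    rw [Finset.sum_comm]
    refine Finset.sum_congr rfl fun i _ => ?_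
    have collapse : (∑ q ∈ (ℛ k ((ℛ k b).left p)).index, ∑ j ∈ (ℛ k ((ℛ k a).left i)).index,
        HopfAlgebra.antipode (R := k)
            ((ℛ k ((ℛ k a).left i)).left j * (ℛ k ((ℛ k b).left p)).left q) *
          ((ℛ k ((ℛ k a).left i)).right j * (ℛ k ((ℛ k b).left p)).right q))
        = (Coalgebra.counit (R := k) ((ℛ k a).left i) *
            Coalgebra.counit (R := k) ((ℛ k b).left p)) • (1 : A) := by
      rw [Finset.sum_comm]
      rw [sum_antipode_mul_mul_eq_smul (ℛ k ((ℛ k a).left i)) (ℛ k ((ℛ k b).left p)),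
        Bialgebra.counit_mul]
    calc (∑ q ∈ (ℛ k ((ℛ k b).left p)).index, ∑ j ∈ (ℛ k ((ℛ k a).left i)).index,
          HopfAlgebra.antipode (R := k)
              ((ℛ k ((ℛ k a).left i)).left j * (ℛ k ((ℛ k b).left p)).left q) *
            ((ℛ k ((ℛ k a).left i)).right j * (ℛ k ((ℛ k b).left p)).right q *
              (HopfAlgebra.antipode (R := k) ((ℛ k b).right p) *
                HopfAlgebra.antipode (R := k) ((ℛ k a).right i))))
        = (∑ q ∈ (ℛ k ((ℛ k b).left p)).index, ∑ j ∈ (ℛ k ((ℛ k a).left i)).index,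
            (HopfAlgebra.antipode (R := k)
                ((ℛ k ((ℛ k a).left i)).left j * (ℛ k ((ℛ k b).left p)).left q) *
              ((ℛ k ((ℛ k a).left i)).right j * (ℛ k ((ℛ k b).left p)).right q)) *
              (HopfAlgebra.antipode (R := k) ((ℛ k b).right p) *
                HopfAlgebra.antipode (R := k) ((ℛ k a).right i))) := by
          refine Finset.sum_congr rfl fun q _ => Finset.sum_congr rfl fun j _ => ?_
          simp only [mul_assoc]
      _ = (∑ q ∈ (ℛ k ((ℛ k b).left p)).index, ∑ j ∈ (ℛ k ((ℛ k a).left i)).index,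
            HopfAlgebra.antipode (R := k)
                ((ℛ k ((ℛ k a).left i)).left j * (ℛ k ((ℛ k b).left p)).left q) *
              ((ℛ k ((ℛ k a).left i)).right j * (ℛ k ((ℛ k b).left p)).right q)) *
            (HopfAlgebra.antipode (R := k) ((ℛ k b).right p) *
              HopfAlgebra.antipode (R := k) ((ℛ k a).right i)) := by
          rw [Finset.sum_mul]
          exact Finset.sum_congr rfl fun q _ => (Finset.sum_mul _ _ _).symm
      _ = _ := by rw [collapse, smul_mul_assoc, one_mul]
  rw [Finset.sum_congr rfl step1]
  conv_rhs => rw [← repr_sum_counit_smul_right (ℛ k b), ← repr_sum_counit_smul_right (ℛ k a)]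
  simp only [map_sum, map_smul, Finset.sum_mul_sum]
  refine Finset.sum_congr rfl fun p _ => Finset.sum_congr rfl fun i _ => ?_
  rw [smul_mul_assoc, mul_smul_comm, smul_smul, mul_comm]


lemma antipode_mul' (a b : A) :
    HopfAlgebra.antipode (R := k) (a * b)
      = HopfAlgebra.antipode (R := k) b * HopfAlgebra.antipode (R := k) a := by
  rw [← FF_eq_left a b]
  exact FF_eq_right a b

end Aux

/-- If `μʳ` is a right integral on `H*` (`μʳ φ = φ(1) μʳ`), then for all
`h ∈ H`, `φ ∈ H*`, with `Δ(h) = ∑ h₁ j ⊗ h₂ j`, one has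
`μʳ(h·?) φ = ∑ j, φ(S⁻¹(h₂ j)) • μʳ(h₁ j ·?)`. -/
theorem right_integral_shift
    [FiniteDimensional k A]
    (Sinv : A →ₗ[k] A)
    (hS1 : ∀ x : A, Sinv (HopfAlgebra.antipode (R := k) x) = x)
    (hS2 : ∀ x : A, HopfAlgebra.antipode (R := k) (Sinv x) = x)
    (μr : Module.Dual k A)
    (hInt : ∀ φ : Module.Dual k A, conv μr φ = φ 1 • μr)
    (h : A) (φ : Module.Dual k A)
    (ι : Type) (s : Finset ι) (h1 h2 : ι → A)
    (hΔ : Coalgebra.comul (R := k) h = ∑ j ∈ s, h1 j ⊗ₜ[k] h2 j) :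
    conv (μr ∘ₗ LinearMap.mulLeft k h) φ
      = ∑ j ∈ s, φ (Sinv (h2 j)) • (μr ∘ₗ LinearMap.mulLeft k (h1 j)) := by
  classical
  open Coalgebra HopfAlgebra in
  have Sinv_one : Sinv 1 = 1 := by
    have := hS1 (1 : A)
    rwa [antipode_one'] at this
  have Sinv_mul : ∀ u v : A, Sinv (u * v) = Sinv v * Sinv u := by
    intro u v
    have e : HopfAlgebra.antipode (R := k) (Sinv v * Sinv u) = u * v := by
      rw [antipode_mul', hS2, hS2]
    rw [← e, hS1]
  set G₂ : A ⊗[k] A →ₗ[k] A :=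
    (LinearMap.mul' k A) ∘ₗ (Sinv.rTensor A) ∘ₗ (TensorProduct.comm k A A).toLinearMap
    with hG₂def
  have hG₂tmul : ∀ u v : A, G₂ (u ⊗ₜ v) = Sinv v * u := by
    intro u v; simp [hG₂def]
  have hG : ∀ c : A, G₂ (Coalgebra.comul (R := k) c)
      = algebraMap k A (Coalgebra.counit (R := k) c) := by
    intro c
    have h0 := HopfAlgebra.sum_antipode_mul_eq_algebraMap_counit (R := k) (Coalgebra.Repr.arbitrary k c)
    have h1 := congrArg Sinv h0
    rw [map_sum] at h1
    have h2 : ∀ i ∈ (Coalgebra.Repr.arbitrary k c).index,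
        Sinv (HopfAlgebra.antipode (R := k) ((Coalgebra.Repr.arbitrary k c).left i) *
            (Coalgebra.Repr.arbitrary k c).right i)
          = Sinv ((Coalgebra.Repr.arbitrary k c).right i) *
              (Coalgebra.Repr.arbitrary k c).left i := by
      intro i _
      rw [Sinv_mul, hS1]
    rw [Finset.sum_congr rfl h2] at h1
    have h3 : Sinv (algebraMap k A (Coalgebra.counit (R := k) c))
        = algebraMap k A (Coalgebra.counit (R := k) c) := by
      rw [Algebra.algebraMap_eq_smul_one, map_smul, Sinv_one]
    rw [h3] at h1
    rw [← (Coalgebra.Repr.arbitrary k c).eq, map_sum]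
    rw [← h1]
    refine Finset.sum_congr rfl fun i _ => ?_
    rw [hG₂tmul]
  have key : (∑ j ∈ s,
        (LinearMap.mulLeft k (Sinv (h2 j))).lTensor A (Coalgebra.comul (R := k) (h1 j)))
      = h ⊗ₜ[k] (1 : A) := by
    have expand : ∀ j : ι,
        (LinearMap.mulLeft k (Sinv (h2 j))).lTensor A (Coalgebra.comul (R := k) (h1 j))
          = (G₂.lTensor A) ((TensorProduct.assoc k A A A)
              ((Coalgebra.comul (R := k) (h1 j)) ⊗ₜ[k] h2 j)) := by
      intro j
      rw [← (Coalgebra.Repr.arbitrary k (h1 j)).eq]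
      rw [sum_tmul, map_sum, map_sum, map_sum]
      refine Finset.sum_congr rfl fun i _ => ?_
      rw [TensorProduct.assoc_tmul, LinearMap.lTensor_tmul, LinearMap.lTensor_tmul,
        hG₂tmul, LinearMap.mulLeft_apply]
    rw [Finset.sum_congr rfl (fun j _ => expand j), ← map_sum, ← map_sum]
    have e1 : (∑ j ∈ s, (Coalgebra.comul (R := k) (h1 j)) ⊗ₜ[k] h2 j)
        = (Coalgebra.comul (R := k) (A := A)).rTensor A (Coalgebra.comul (R := k) h) := by
      rw [hΔ, map_sum]
      exact Finset.sum_congr rfl fun j _ => (LinearMap.rTensor_tmul _ _ _ _).symm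
    rw [e1, Coalgebra.coassoc_apply, ← LinearMap.lTensor_comp_apply]
    have hGc : G₂ ∘ₗ (Coalgebra.comul (R := k) (A := A))
        = (Algebra.linearMap k A) ∘ₗ (Coalgebra.counit (R := k)) := by
      apply LinearMap.ext
      intro c
      simp [hG c]
    rw [hGc, LinearMap.lTensor_comp_apply, Coalgebra.lTensor_counit_comul]
    simp
  apply LinearMap.ext
  intro x
  set N : A ⊗[k] A →ₗ[k] k :=
    (LinearMap.mul' k k) ∘ₗ (TensorProduct.map μr φ) ∘ₗ
      (LinearMap.mulRight k (Coalgebra.comul (R := k) x)) with hNdef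
  have hN : ∀ u v : A, N (u ⊗ₜ v) = ∑ m ∈ (Coalgebra.Repr.arbitrary k x).index,
      μr (u * (Coalgebra.Repr.arbitrary k x).left m) *
        φ (v * (Coalgebra.Repr.arbitrary k x).right m) := by
    intro u v
    rw [hNdef]
    simp only [LinearMap.comp_apply, LinearMap.mulRight_apply]
    rw [← (Coalgebra.Repr.arbitrary k x).eq, Finset.mul_sum]
    simp only [Algebra.TensorProduct.tmul_mul_tmul]
    simp only [map_sum, TensorProduct.map_tmul, LinearMap.mul'_apply]
  have hLHS : conv (μr ∘ₗ LinearMap.mulLeft k h) φ x = N (h ⊗ₜ[k] (1 : A)) := by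
    rw [hN]
    simp only [conv, LinearMap.comp_apply]
    rw [← (Coalgebra.Repr.arbitrary k x).eq]
    simp only [map_sum, TensorProduct.map_tmul, LinearMap.mul'_apply, LinearMap.comp_apply,
      LinearMap.mulLeft_apply, one_mul]
  have hj : ∀ j ∈ s, φ (Sinv (h2 j)) * μr (h1 j * x)
      = N ((LinearMap.mulLeft k (Sinv (h2 j))).lTensor A (Coalgebra.comul (R := k) (h1 j))) := by
    intro j _
    have hpsi := hInt (φ ∘ₗ LinearMap.mulLeft k (Sinv (h2 j)))
    have e2 : conv μr (φ ∘ₗ LinearMap.mulLeft k (Sinv (h2 j))) (h1 j * x)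
        = φ (Sinv (h2 j)) * μr (h1 j * x) := by
      rw [hpsi]
      simp
    rw [← e2]
    simp only [conv, LinearMap.comp_apply]
    rw [Bialgebra.comul_mul, ← (Coalgebra.Repr.arbitrary k (h1 j)).eq,
      ← (Coalgebra.Repr.arbitrary k x).eq, Finset.sum_mul_sum]
    simp only [Algebra.TensorProduct.tmul_mul_tmul]
    simp only [map_sum, TensorProduct.map_tmul, LinearMap.mul'_apply, LinearMap.comp_apply,
      LinearMap.mulLeft_apply, LinearMap.lTensor_tmul]
    refine Finset.sum_congr rfl fun i _ => ?_
    rw [hN]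
    refine Finset.sum_congr rfl fun m _ => ?_
    rw [mul_assoc]
  rw [LinearMap.sum_apply]
  simp only [LinearMap.smul_apply, LinearMap.comp_apply, LinearMap.mulLeft_apply, smul_eq_mul]
  rw [Finset.sum_congr rfl hj, ← map_sum, key]
  exact hLHS
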